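/- Let S = { z ∈ ℂ \ {0} : |arg z| < π/3 } and let Log denote the principal branch of the complex logarithm. Then for every z ∈ S one has (1/4)·log(1 + |z|) ≤ |Log(1 + z)|, and there exists a constant m₁ > 0 such that |Log(1 + z)| ≤ m₁·log(1 + |z|) for all z ∈ S. -/

import Mathlib

open Complex

private lemma re_half {z : ℂ} (hz : z ≠ 0) (harg : |z.arg| < Real.pi / 3) :
    ‖z‖ / 2 ≤ z.re := by
  have hcos : Real.cos (z.arg) = z.re / ‖z‖ := Complex.cos_arg hz
  have habs : 0 < ‖z‖ := norm_pos_iff.mpr hz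
  have h1 : Real.cos (Real.pi / 3) ≤ Real.cos (|z.arg|) := by
    apply Real.cos_le_cos_of_nonneg_of_le_pi (abs_nonneg _) _ harg.le
    linarith [Real.pi_pos]
  rw [Real.cos_abs, hcos, Real.cos_pi_div_three, le_div_iff₀ habs] at h1
  linarith

private lemma sq_abs_ge {z : ℂ} (hz : z ≠ 0) (harg : |z.arg| < Real.pi / 3) :
    1 + ‖z‖ ≤ (‖1 + z‖) ^ 2 := by
  have h1 := re_half hz harg
  have h2 : (‖1 + z‖) ^ 2 = (1 + z.re) ^ 2 + z.im ^ 2 := by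
    rw [Complex.sq_norm, Complex.normSq_apply]; simp; ring
  nlinarith [sq_nonneg z.im, norm_nonneg z]

private lemma one_le_abs_one_add {z : ℂ} (hz : z ≠ 0) (harg : |z.arg| < Real.pi / 3) :
    1 ≤ ‖1 + z‖ := by
  have h := sq_abs_ge hz harg
  nlinarith [norm_nonneg z, norm_nonneg (1 + z)]

private lemma log_ge_half {t : ℝ} (ht : 0 ≤ t) (ht1 : t ≤ 1) :
    t / 2 ≤ Real.log (1 + t) := by
  have h1 : 0 < 1 + t := by linarith
  have h2 : Real.log (1 + t)⁻¹ ≤ (1 + t)⁻¹ - 1 :=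
    Real.log_le_sub_one_of_pos (by positivity)
  rw [Real.log_inv] at h2
  have h3 : (1 + t)⁻¹ ≤ 1 - t / 2 := by
    rw [inv_eq_one_div, div_le_iff₀ h1]
    nlinarith
  linarith

theorem log_comparable_on_sector :
    (∀ z : ℂ, z ≠ 0 → |z.arg| < Real.pi / 3 →
      (1/4) * Real.log (1 + ‖z‖) ≤ ‖Complex.log (1 + z)‖) ∧
    ∃ m₁ : ℝ, 0 < m₁ ∧ ∀ z : ℂ, z ≠ 0 → |z.arg| < Real.pi / 3 →
      ‖Complex.log (1 + z)‖ ≤ m₁ * Real.log (1 + ‖z‖) := by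
  constructor
  · intro z hz harg
    have habs : 0 < ‖z‖ := norm_pos_iff.mpr hz
    have h1 := sq_abs_ge hz harg
    have hge1 := one_le_abs_one_add hz harg
    have hlogsq : Real.log (1 + ‖z‖) ≤ Real.log ((‖1 + z‖) ^ 2) :=
      Real.log_le_log (by linarith) h1
    rw [Real.log_pow] at hlogsq
    have hre : Real.log (‖1 + z‖) ≤ ‖Complex.log (1 + z)‖ := by
      calc Real.log (‖1 + z‖) = |(Complex.log (1 + z)).re| := by
            rw [Complex.log_re, _root_.abs_of_nonneg (Real.log_nonneg hge1)]
        _ ≤ ‖Complex.log (1 + z)‖ := Complex.abs_re_le_norm _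
    have hnn : 0 ≤ Real.log (1 + ‖z‖) := Real.log_nonneg (by linarith)
    push_cast at hlogsq
    nlinarith
  · refine ⟨1 + Real.pi, by linarith [Real.pi_pos], fun z hz harg => ?_⟩
    have habs : 0 < ‖z‖ := norm_pos_iff.mpr hz
    have hge1 := one_le_abs_one_add hz harg
    have hnn : 0 ≤ Real.log (1 + ‖z‖) := Real.log_nonneg (by linarith)
    -- real part bound
    have hre : |(Complex.log (1 + z)).re| ≤ Real.log (1 + ‖z‖) := by
      rw [Complex.log_re, _root_.abs_of_nonneg (Real.log_nonneg hge1)]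
      apply Real.log_le_log (by linarith)
      calc ‖1 + z‖ ≤ ‖1‖ + ‖z‖ := norm_add_le _ _
        _ = 1 + ‖z‖ := by rw [norm_one]
    -- imaginary part bound
    have hrepos : 0 ≤ (1 + z).re := by
      have := re_half hz harg; simp only [Complex.add_re, Complex.one_re]; linarith
    have hargle : |(1 + z).arg| ≤ Real.pi / 2 := Complex.abs_arg_le_pi_div_two_iff.2 hrepos
    have hne : (1 : ℂ) + z ≠ 0 := by
      intro h; rw [h, norm_zero] at hge1; linarith
    have hsin : Real.sin ((1 + z).arg) = z.im / ‖1 + z‖ := by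
      rw [Complex.sin_arg]; simp
    have hsinabs : Real.sin (|(1 + z).arg|) ≤ ‖z‖ := by
      have him : |z.im| ≤ ‖z‖ := Complex.abs_im_le_norm z
      have h0 : (0:ℝ) < ‖1 + z‖ := by linarith
      have key : ∀ y : ℝ, y ≤ |z.im| → y / ‖1 + z‖ ≤ ‖z‖ := by
        intro y hy
        calc y / ‖1 + z‖ ≤ |z.im| / ‖1 + z‖ := by gcongr
          _ ≤ |z.im| / 1 := by gcongr
          _ = |z.im| := div_one _
          _ ≤ ‖z‖ := him
      rcases abs_cases ((1 + z).arg) with ⟨h, _⟩ | ⟨h, _⟩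
      · rw [h, hsin]; exact key z.im (le_abs_self _)
      · rw [h, Real.sin_neg, hsin, ← neg_div]; exact key (-z.im) (neg_le_abs _)
    have hmul : 2 / Real.pi * |(1 + z).arg| ≤ Real.sin (|(1 + z).arg|) :=
      Real.mul_le_sin (abs_nonneg _) hargle
    have harg2 : |(1 + z).arg| ≤ Real.pi / 2 * ‖z‖ := by
      have hpi := Real.pi_pos
      have := hmul.trans hsinabs
      rw [div_mul_eq_mul_div, div_le_iff₀ hpi] at this
      nlinarith
    have him : |(Complex.log (1 + z)).im| ≤ Real.pi * Real.log (1 + ‖z‖) := by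
      rw [Complex.log_im]
      rcases le_or_gt (‖z‖) 1 with hle | hgt
      · have := log_ge_half habs.le hle
        have hpi := Real.pi_pos
        nlinarith
      · have hlog2 : Real.log 2 ≤ Real.log (1 + ‖z‖) :=
          Real.log_le_log (by norm_num) (by linarith)
        have h2 : (0.6931471803 : ℝ) < Real.log 2 := Real.log_two_gt_d9
        have hpi := Real.pi_pos
        nlinarith [hargle]
    calc ‖Complex.log (1 + z)‖
        ≤ |(Complex.log (1 + z)).re| + |(Complex.log (1 + z)).im| :=
          Complex.norm_le_abs_re_add_abs_im _
      _ ≤ Real.log (1 + ‖z‖) + Real.pi * Real.log (1 + ‖z‖) := by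
          linarith
      _ = (1 + Real.pi) * Real.log (1 + ‖z‖) := by ring
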